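/- The following exact inner-product values hold: ⟪α₃,α₄⟫ = −τ/2 (so its reduced value is 0, i.e. α₃ and α₄ become orthogonal); ⟪τα₃, τα₄⟫ = −(2τ+1)/2 (so its reduced value is −1/2, a simple link); and ⟪τα₃, α₄⟫ = ⟪α₃, τα₄⟫ = −(τ+1)/2 (so the reduced values are −1/2, simple links between the two copies of H₄). -/

import Mathlib

noncomputable section

open RealInnerProductSpace

/-- The golden ratio `τ = (1+√5)/2`. -/
def τ : ℝ := (1 + Real.sqrt 5) / 2

/-- The Galois conjugate `σ = (1-√5)/2 = 1 - τ` of the golden ratio. -/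
def σ : ℝ := (1 - Real.sqrt 5) / 2

/-- The simple root `α₃ = ½(0,1,-σ,-τ)` of `H₄` in Euclidean `ℝ⁴`. -/
def α₃ : EuclideanSpace ℝ (Fin 4) := WithLp.toLp 2 ![0, 1 / 2, -σ / 2, -τ / 2]

/-- The simple root `α₄ = ½(0,-1,-σ,τ)` of `H₄` in Euclidean `ℝ⁴`. -/
def α₄ : EuclideanSpace ℝ (Fin 4) := WithLp.toLp 2 ![0, -1 / 2, -σ / 2, τ / 2]

lemma sqrt5_sq : Real.sqrt 5 * Real.sqrt 5 = 5 :=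
  Real.mul_self_sqrt (by norm_num)

lemma inner34 : ⟪α₃, α₄⟫ = -τ / 2 := by
  have h := sqrt5_sq
  simp [α₃, α₄, τ, σ, PiLp.inner_apply, Fin.sum_univ_four]
  ring_nf


/-- The exact inner-product values: `⟪α₃,α₄⟫ = −τ/2` (reduced value `0`: orthogonal),
`⟪τα₃,τα₄⟫ = −(2τ+1)/2` (reduced value `−1/2`: a simple link), and
`⟪τα₃,α₄⟫ = ⟪α₃,τα₄⟫ = −(τ+1)/2` (reduced values `−1/2`: simple links between the
two copies of `H₄`). -/
theorem exact_inner_product_values :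
    ⟪α₃, α₄⟫ = -τ / 2 ∧
    ⟪τ • α₃, τ • α₄⟫ = -(2 * τ + 1) / 2 ∧
    ⟪τ • α₃, α₄⟫ = -(τ + 1) / 2 ∧
    ⟪α₃, τ • α₄⟫ = -(τ + 1) / 2 := by
  have h := inner34
  have hτ : τ * τ = τ + 1 := by
    have := sqrt5_sq
    unfold τ; nlinarith [this]
  refine ⟨h, ?_, ?_, ?_⟩
  · rw [real_inner_smul_left, real_inner_smul_right, h]; nlinarith [hτ]
  · rw [real_inner_smul_left, h]; nlinarith [hτ]
  · rw [real_inner_smul_right, h]; nlinarith [hτ]
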